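/- Let M be a matroid on a finite ground set E. The Bergman fan B̃(M) is tropically convex: if u, v ∈ B̃(M) and a, b ∈ ℝ, then the vector w ∈ ℝ^E defined by w_e = max(u_e + a, v_e + b) also lies in B̃(M). (Equivalently, the reflected set −B̃(M) is closed under the min-plus tropical combinations (a ⊙ x) ⊕ (b ⊙ y).) -/

import Mathlib

open scoped Classical

variable {α : Type*}

/-- The ω-weight of a set of elements: the sum of ω over the set. -/
noncomputable def wSum (ω : α → ℝ) (B : Set α) : ℝ := ∑ᶠ e ∈ B, ω e

/-- `B` is an ω-minimum basis of `M`: a basis whose ω-weight is minimum among all bases. -/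
def IsMinBase [Fintype α] (M : Matroid α) (ω : α → ℝ) (B : Set α) : Prop :=
  M.IsBase B ∧ ∀ B' : Set α, M.IsBase B' → wSum ω B ≤ wSum ω B'

/-- `ω` lies in the Bergman fan of `M`: every element lies in some ω-minimum basis. -/
def InBergmanFan [Fintype α] (M : Matroid α) (ω : α → ℝ) : Prop :=
  ∀ e : α, ∃ B : Set α, IsMinBase M ω B ∧ e ∈ B

/-- `C` is a circuit of `M`: a minimal dependent set. -/
def IsCircuit (M : Matroid α) (C : Set α) : Prop := Minimal M.Dep C

/-- A cocircuit of `M` is a circuit of the dual matroid `M✶`. -/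
def IsCocircuit (M : Matroid α) (C : Set α) : Prop := IsCircuit M✶ C

lemma wSum_insert [Fintype α] (ω : α → ℝ) {B : Set α} {f : α} (hf : f ∉ B) :
    wSum ω (insert f B) = ω f + wSum ω B := by
  rw [wSum, wSum, Set.insert_eq,
    finsum_mem_union (Set.disjoint_singleton_left.2 hf) (Set.toFinite _) (Set.toFinite _),
    finsum_mem_singleton]

lemma wSum_exchange [Fintype α] (ω : α → ℝ) {B : Set α} {e f : α}
    (he : e ∈ B) (hf : f ∉ B) :
    wSum ω (insert f (B \ {e})) = wSum ω B - ω e + ω f := by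
  have h1 : wSum ω (insert f (B \ {e})) = ω f + wSum ω (B \ {e}) :=
    wSum_insert ω (fun h => hf h.1)
  have h2 : wSum ω B = ω e + wSum ω (B \ {e}) := by
    conv_lhs => rw [← Set.insert_eq_of_mem he, ← Set.insert_diff_singleton]
    exact wSum_insert ω (B := B \ {e}) (f := e) (by simp)
  linarith

/-- Forward direction: if `e` lies in an ω-minimum basis, then `e` is not in the closure of the
set of strictly ω-cheaper elements. -/
lemma not_mem_closure_of_isMinBase [Fintype α] {M : Matroid α} (hE : M.E = Set.univ)
    {ω : α → ℝ} {B : Set α} (hB : IsMinBase M ω B) {e : α} (heB : e ∈ B) :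
    e ∉ M.closure {f | ω f < ω e} := by
  intro he
  have hBi := hB.1.indep
  have hecl : e ∉ M.closure (B \ {e}) := hBi.notMem_closure_diff_of_mem heB
  have hex : ∃ f, ω f < ω e ∧ f ∉ M.closure (B \ {e}) := by
    by_contra hcon
    push_neg at hcon
    exact hecl (M.closure_subset_closure_of_subset_closure (fun x hx => hcon x hx) he)
  obtain ⟨f, hfe, hfcl⟩ := hex
  have hfB : f ∉ B \ {e} := fun h =>
    hfcl (M.subset_closure _ (by rw [hE]; exact Set.subset_univ _) h)
  have hind : M.Indep (insert f (B \ {e})) :=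
    ((hBi.subset Set.diff_subset).insert_indep_iff_of_notMem hfB).2
      ⟨by simp [hE], hfcl⟩
  obtain ⟨B'', hB'', hsub⟩ := hind.exists_isBase_superset
  have hfe' : f ≠ e := fun h => lt_irrefl _ (h ▸ hfe)
  have hfBB : f ∉ B := fun h => hfB ⟨h, hfe'⟩
  have hpos : 0 < B.ncard := (Set.ncard_pos (Set.toFinite _)).2 ⟨e, heB⟩
  have h1 : (insert f (B \ {e})).ncard = B.ncard := by
    rw [Set.ncard_insert_of_notMem hfB, Set.ncard_diff_singleton_of_mem heB]
    omega
  have h2 : B''.ncard = B.ncard := hB''.ncard_eq_ncard_of_isBase hB.1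
  have heq : insert f (B \ {e}) = B'' :=
    Set.eq_of_subset_of_ncard_le hsub (by omega) (Set.toFinite _)
  have hw : wSum ω B'' = wSum ω B - ω e + ω f := by
    rw [← heq]; exact wSum_exchange ω heB hfBB
  have := hB.2 B'' hB''
  linarith

/-- Backward direction: if `e` is not in the closure of the set of strictly ω-cheaper elements,
then `e` lies in some ω-minimum basis. -/
lemma exists_minBase_mem [Fintype α] {M : Matroid α} (hE : M.E = Set.univ)
    {ω : α → ℝ} {e : α} (he : e ∉ M.closure {f | ω f < ω e}) :
    ∃ B, IsMinBase M ω B ∧ e ∈ B := by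
  obtain ⟨B₀, hB₀⟩ := M.exists_isBase
  obtain ⟨B, hBmem, hBmin⟩ :=
    Set.exists_min_image {B | M.IsBase B} (wSum ω) (Set.toFinite _) ⟨B₀, hB₀⟩
  have hB : M.IsBase B := hBmem
  have hmin : ∀ B', M.IsBase B' → wSum ω B ≤ wSum ω B' := fun B' h => hBmin B' h
  by_cases heB : e ∈ B
  · exact ⟨B, ⟨hB, hmin⟩, heB⟩
  set T : Set α := {f ∈ B | ω f < ω e} with hT
  have hTS : T ⊆ {f | ω f < ω e} := fun x hx => hx.2
  have hTB : T ⊆ B := fun x hx => hx.1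
  have heT : e ∉ T := fun h => heB h.1
  have heclT : e ∉ M.closure T := fun h => he (M.closure_subset_closure hTS h)
  have hins : M.Indep (insert e T) :=
    (((hB.indep.subset hTB)).insert_indep_iff_of_notMem heT).2 ⟨by simp [hE], heclT⟩
  obtain ⟨B', hB', hsub, hsub2⟩ := hins.exists_isBase_subset_union_isBase hB
  have heB' : e ∈ B' := hsub (Set.mem_insert _ _)
  have hB'sub : B' ⊆ insert e B := by
    intro x hx
    rcases hsub2 hx with h | h
    · rcases h with h | h
      · exact h ▸ Set.mem_insert _ _
      · exact Set.mem_insert_of_mem _ (hTB h)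
    · exact Set.mem_insert_of_mem _ h
  have hcard : B.ncard = B'.ncard := hB.ncard_eq_ncard_of_isBase hB'
  have hpos : 0 < B'.ncard := (Set.ncard_pos (Set.toFinite _)).2 ⟨e, heB'⟩
  have hne : ¬ (B ⊆ B' \ {e}) := by
    intro hcon
    have h1 : B' \ {e} ⊆ B := by
      intro x hx
      rcases hB'sub hx.1 with h | h
      · exact absurd h hx.2
      · exact h
    have hBeq : B = B' \ {e} := hcon.antisymm h1
    have h2 : (B' \ {e}).ncard = B'.ncard - 1 := Set.ncard_diff_singleton_of_mem heB'
    rw [← hBeq] at h2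
    omega
  obtain ⟨f, hfB, hfB'e⟩ := Set.not_subset.1 hne
  have hfe : f ≠ e := fun h => heB (h ▸ hfB)
  have hfB' : f ∉ B' := fun h => hfB'e ⟨h, hfe⟩
  have hB'sub2 : B' ⊆ insert e (B \ {f}) := by
    intro x hx
    rcases eq_or_ne x e with rfl | hxe
    · exact Set.mem_insert _ _
    · have hxB : x ∈ B := by
        rcases hB'sub hx with h | h
        · exact absurd h hxe
        · exact h
      exact Set.mem_insert_of_mem _ ⟨hxB, fun hxf => hfB' (hxf ▸ hx)⟩
  have heBf : e ∉ B \ {f} := fun h => heB h.1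
  have hcard2 : (insert e (B \ {f})).ncard = B.ncard := by
    rw [Set.ncard_insert_of_notMem heBf, Set.ncard_diff_singleton_of_mem hfB]
    omega
  have heq : B' = insert e (B \ {f}) :=
    Set.eq_of_subset_of_ncard_le hB'sub2 (by omega) (Set.toFinite _)
  have hfT : f ∉ T := fun h => hfB' (hsub (Set.mem_insert_of_mem _ h))
  have hef : ω e ≤ ω f := le_of_not_gt (fun h => hfT ⟨hfB, h⟩)
  have hw : wSum ω B' = wSum ω B - ω f + ω e := by
    rw [heq]; exact wSum_exchange ω hfB heB
  refine ⟨B', ⟨hB', fun B₂ h₂ => ?_⟩, heB'⟩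
  have := hmin B₂ h₂
  linarith

/-- The Bergman fan is tropically convex: if u, v ∈ B̃(M) and a, b ∈ ℝ,
then the vector e ↦ max (u_e + a) (v_e + b) also lies in B̃(M). -/
theorem stmt10 [Fintype α] (M : Matroid α) (hE : M.E = Set.univ) (u v : α → ℝ)
    (hu : InBergmanFan M u) (hv : InBergmanFan M v) (a b : ℝ) :
    InBergmanFan M (fun e => max (u e + a) (v e + b)) := by
  intro e
  rcases le_total (v e + b) (u e + a) with hc | hc
  · obtain ⟨B, hB, heB⟩ := hu e
    have h1 : e ∉ M.closure {f | u f < u e} := not_mem_closure_of_isMinBase hE hB heB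
    apply exists_minBase_mem hE
    intro hmem
    apply h1
    refine M.closure_subset_closure ?_ hmem
    intro f hf
    simp only [Set.mem_setOf_eq] at hf ⊢
    have h2 := le_max_left (u f + a) (v f + b)
    rw [max_eq_left hc] at hf
    linarith
  · obtain ⟨B, hB, heB⟩ := hv e
    have h1 : e ∉ M.closure {f | v f < v e} := not_mem_closure_of_isMinBase hE hB heB
    apply exists_minBase_mem hE
    intro hmem
    apply h1
    refine M.closure_subset_closure ?_ hmem
    intro f hf
    simp only [Set.mem_setOf_eq] at hf ⊢
    have h2 := le_max_right (u f + a) (v f + b)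
    rw [max_eq_right hc] at hf
    linarith
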